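/- In SL(2,ℤ), any matrix of the form (σ̄₁σ̄₂σ̄₁)^{2n} W where n ≥ 1 and W is a product of matrices σ̄₁⁻¹ = [[1,0],[1,1]] and σ̄₂ = [[1,1],[0,1]] containing at least one factor of each, has all entries of the same sign and has trace of absolute value strictly greater than 2 (i.e., it is hyperbolic). -/

import Mathlib

/-- `σ̄₁ = [[1,0],[-1,1]]` in `SL(2,ℤ)`. -/
def sbar₁ : Matrix.SpecialLinearGroup (Fin 2) ℤ := ⟨!![1, 0; -1, 1], by decide⟩

/-- `σ̄₂ = [[1,1],[0,1]]` in `SL(2,ℤ)`. -/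
def sbar₂ : Matrix.SpecialLinearGroup (Fin 2) ℤ := ⟨!![1, 1; 0, 1], by decide⟩

lemma sbar₁_inv : sbar₁⁻¹ = (⟨!![1,0;1,1], by decide⟩ : Matrix.SpecialLinearGroup (Fin 2) ℤ) := by
  apply inv_eq_of_mul_eq_one_right
  ext i j
  fin_cases i <;> fin_cases j <;>
    decide

lemma key_sq : ((sbar₁ * sbar₂ * sbar₁ : Matrix.SpecialLinearGroup (Fin 2) ℤ) : Matrix (Fin 2) (Fin 2) ℤ)^2 = -1 := by
  simp only [Matrix.SpecialLinearGroup.coe_mul]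
  ext i j
  fin_cases i <;> fin_cases j <;>
    simp [sbar₁, sbar₂, pow_two, Matrix.mul_apply, Fin.sum_univ_two]

lemma word_entries (l : List Bool) :
    ∀ W : Matrix (Fin 2) (Fin 2) ℤ,
      W = ((l.map fun b => if b then sbar₁⁻¹ else sbar₂).prod : Matrix.SpecialLinearGroup (Fin 2) ℤ) →
      1 ≤ W 0 0 ∧ 1 ≤ W 1 1 ∧ 0 ≤ W 0 1 ∧ 0 ≤ W 1 0 ∧
        (true ∈ l → 1 ≤ W 1 0) ∧ (false ∈ l → 1 ≤ W 0 1) := by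
  induction l with
  | nil => intro W hW; simp at hW; subst hW; norm_num
  | cons b t ih =>
    intro W hW
    set V : Matrix.SpecialLinearGroup (Fin 2) ℤ :=
      ((t.map fun b => if b then sbar₁⁻¹ else sbar₂).prod) with hV
    obtain ⟨h00, h11, h01, h10, ht, hf⟩ := ih V rfl
    cases b with
    | true =>
      have hprod : W = !![(1:ℤ),0;1,1] * (V : Matrix (Fin 2) (Fin 2) ℤ) := by
        rw [hW]
        have c1 : ((sbar₁⁻¹ : Matrix.SpecialLinearGroup (Fin 2) ℤ) : Matrix (Fin 2) (Fin 2) ℤ) = !![(1:ℤ),0;1,1] := by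
          rw [sbar₁_inv]
        simp only [List.map_cons, List.prod_cons, if_true, Matrix.SpecialLinearGroup.coe_mul,
          c1, ← hV]
      have e : ∀ i j, W i j = (!![(1:ℤ),0;1,1] * (V : Matrix (Fin 2) (Fin 2) ℤ)) i j := by
        intro i j; rw [hprod]
      have e00 := e 0 0; have e01 := e 0 1; have e10 := e 1 0; have e11 := e 1 1
      simp [Matrix.mul_apply, Fin.sum_univ_two] at e00 e01 e10 e11
      refine ⟨by omega, by omega, by omega, by omega, fun _ => by omega, fun hf' => ?_⟩
      have := hf (by simpa using hf'); omega
    | false =>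
      have hprod : W = !![(1:ℤ),1;0,1] * (V : Matrix (Fin 2) (Fin 2) ℤ) := by
        rw [hW]
        simp only [List.map_cons, List.prod_cons, Bool.false_eq_true, if_false, Matrix.SpecialLinearGroup.coe_mul, ← hV]
        norm_num [sbar₂]
      have e : ∀ i j, W i j = (!![(1:ℤ),1;0,1] * (V : Matrix (Fin 2) (Fin 2) ℤ)) i j := by
        intro i j; rw [hprod]
      have e00 := e 0 0; have e01 := e 0 1; have e10 := e 1 0; have e11 := e 1 1
      simp [Matrix.mul_apply, Fin.sum_univ_two] at e00 e01 e10 e11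
      refine ⟨by omega, by omega, by omega, by omega, fun ht' => ?_, fun _ => by omega⟩
      have := ht (by simpa using ht'); omega

/-- Any matrix `(σ̄₁σ̄₂σ̄₁)^{2n} W` in `SL(2,ℤ)`, where `n ≥ 1` and `W` is a product
of matrices `σ̄₁⁻¹ = [[1,0],[1,1]]` and `σ̄₂ = [[1,1],[0,1]]` containing at least one
factor of each, has all entries of the same sign and trace of absolute value
strictly greater than `2` (i.e., it is hyperbolic). -/
theorem hyperbolic_of_mixed_word (n : ℕ) (hn : 1 ≤ n)
    (l : List Bool) (h₁ : true ∈ l) (h₂ : false ∈ l)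
    (W : Matrix.SpecialLinearGroup (Fin 2) ℤ)
    (hW : W = (l.map fun b => if b then sbar₁⁻¹ else sbar₂).prod)
    (M : Matrix.SpecialLinearGroup (Fin 2) ℤ)
    (hM : M = (sbar₁ * sbar₂ * sbar₁) ^ (2 * n) * W) :
    ((∀ i j, 0 < (M : Matrix (Fin 2) (Fin 2) ℤ) i j) ∨
      (∀ i j, (M : Matrix (Fin 2) (Fin 2) ℤ) i j < 0)) ∧
    2 < |Matrix.trace (M : Matrix (Fin 2) (Fin 2) ℤ)| := by
  obtain ⟨h00, h11, h01, h10, ht, hf⟩ :=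
    word_entries l (W : Matrix (Fin 2) (Fin 2) ℤ) (by rw [hW])
  have hc := ht h₁
  have hb := hf h₂
  have hdet : (W : Matrix (Fin 2) (Fin 2) ℤ).det = 1 := W.2
  rw [Matrix.det_fin_two] at hdet
  have htr : 3 ≤ (W : Matrix (Fin 2) (Fin 2) ℤ) 0 0 + (W : Matrix (Fin 2) (Fin 2) ℤ) 1 1 := by
    nlinarith
  -- the power part
  have hMW : (M : Matrix (Fin 2) (Fin 2) ℤ)
      = (-1 : Matrix (Fin 2) (Fin 2) ℤ) ^ n * (W : Matrix (Fin 2) (Fin 2) ℤ) := by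
    rw [hM, Matrix.SpecialLinearGroup.coe_mul, Matrix.SpecialLinearGroup.coe_pow,
      ← key_sq, ← pow_mul, mul_comm 2 n, pow_mul]
  have hWpos : ∀ i j, 0 < (W : Matrix (Fin 2) (Fin 2) ℤ) i j := by
    intro i j; fin_cases i <;> fin_cases j <;> simpa using by omega
  rcases Nat.even_or_odd n with he | ho
  · have : (M : Matrix (Fin 2) (Fin 2) ℤ) = (W : Matrix (Fin 2) (Fin 2) ℤ) := by
      rw [hMW, he.neg_one_pow, one_mul]
    rw [this]
    refine ⟨Or.inl hWpos, ?_⟩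
    rw [Matrix.trace_fin_two]
    rw [abs_of_pos (by omega)]; omega
  · have : (M : Matrix (Fin 2) (Fin 2) ℤ) = -(W : Matrix (Fin 2) (Fin 2) ℤ) := by
      rw [hMW, ho.neg_one_pow, neg_one_mul]
    rw [this]
    refine ⟨Or.inr ?_, ?_⟩
    · intro i j; simpa using hWpos i j
    · rw [Matrix.trace_neg, Matrix.trace_fin_two, abs_neg, abs_of_pos (by omega)]; omega
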